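/- Let d ≥ 2, c > 0, and t = exp(−c(1−t)^d) with t ∈ (0,1). Then the function g_d(c) = (c/(d+1))(1−t(c))^{d+1} − (1−t(c)) + c·t(c)·(1−t(c))^d, where t(c) is the smallest root in (0,1) of t = exp(−c(1−t)^d), satisfies: at any c where t(c) is differentiable, g_d'(c) = (1−t(c))^{d+1}/(d+1). -/

import Mathlib

/-- Let `d ≥ 2` and suppose `t : ℝ → ℝ` satisfies the fixed-point relation
`t(x) = exp(-x(1-t(x))^d)` for all `x`, with `t(c) ∈ (0,1)` and `t` differentiable
at `c`.  Then `g_d(x) = (x/(d+1))(1-t(x))^{d+1} - (1-t(x)) + x·t(x)·(1-t(x))^d`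
is differentiable at `c` with derivative `(1-t(c))^{d+1}/(d+1)`. -/
theorem deriv_of_limit_betti (d : ℕ) (hd : 2 ≤ d) (t : ℝ → ℝ) (c t' : ℝ)
    (hfix : ∀ x, t x = Real.exp (-x * (1 - t x) ^ d))
    (htc : t c ∈ Set.Ioo (0:ℝ) 1)
    (hderiv : HasDerivAt t t' c) :
    HasDerivAt (fun x =>
        x / ((d:ℝ) + 1) * (1 - t x) ^ (d + 1) - (1 - t x) + x * t x * (1 - t x) ^ d)
      ((1 - t c) ^ (d + 1) / ((d:ℝ) + 1)) c := by
  obtain ⟨k, rfl⟩ : ∃ k, d = k + 2 := ⟨d - 2, by omega⟩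
  set n := k + 2 with hn
  have hu : HasDerivAt (fun x => 1 - t x) (-t') c := hderiv.const_sub 1
  -- derivative of the inner function -x * (1 - t x)^n
  have hin : HasDerivAt (fun x => -x * (1 - t x) ^ n)
      (-1 * (1 - t c) ^ n + -c * ((n : ℝ) * (1 - t c) ^ (n - 1) * (-t'))) c :=
    ((hasDerivAt_id c).neg).mul (hu.pow n)
  have hexp := hin.exp
  have htexp : Real.exp (-c * (1 - t c) ^ n) = t c := (hfix c).symm
  rw [show (fun x => Real.exp (-x * (1 - t x) ^ n)) = t from (funext fun x => (hfix x).symm),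
    htexp] at hexp
  have key := hderiv.unique hexp
  have h1 : HasDerivAt (fun x => x / ((n:ℝ) + 1) * (1 - t x) ^ (n + 1))
      ((1 / ((n:ℝ)+1)) * (1 - t c) ^ (n+1) +
        (c / ((n:ℝ)+1)) * (((n:ℝ)+1) * (1 - t c) ^ ((n+1)-1) * (-t'))) c := by
    have := ((hasDerivAt_id c).div_const ((n:ℝ)+1)).mul (hu.pow (n+1))
    simpa [Pi.mul_def, Pi.pow_def] using this
  have h3 : HasDerivAt (fun x => x * t x * (1 - t x) ^ n)
      ((1 * t c + c * t') * (1 - t c) ^ n +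
        c * t c * ((n : ℝ) * (1 - t c) ^ (n - 1) * (-t'))) c :=
    (((hasDerivAt_id c).mul hderiv)).mul (hu.pow n)
  have h := (h1.sub hu).add h3
  refine h.congr_deriv (Eq.symm ?_)
  have hne : ((n:ℝ) + 1) ≠ 0 := by positivity
  simp only [hn] at key ⊢
  push_cast at key ⊢
  field_simp
  linear_combination (-((k:ℝ)+3)) * key
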